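/- Let D be a simple (digon-free) bipartite digraph with δ(D) ≥ 2. Then dib(D) ≥ 3. -/

import Mathlib

open Classical

/-- A closed directed walk of length `n+1` inside the set `S`. -/
def IsClosedWalkIn {V : Type*} (E : V → V → Prop) (S : Set V) (n : ℕ)
    (c : Fin (n + 1) → V) : Prop :=
  (∀ i, c i ∈ S) ∧ ∀ i : Fin (n + 1), E (c i) (c (i + 1))

/-- The set `S` induces no directed cycle (equivalently, no closed directed walk). -/
def AcyclicSet {V : Type*} (E : V → V → Prop) (S : Set V) : Prop :=
  ¬ ∃ (n : ℕ) (c : Fin (n + 1) → V), IsClosedWalkIn E S n c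

/-- An acyclic coloring: every color class induces no directed cycle. -/
def AcyclicColoring {V : Type*} (E : V → V → Prop) {k : ℕ} (Γ : V → Fin k) : Prop :=
  ∀ i : Fin k, AcyclicSet E {v | Γ v = i}

/-- `u` is a b⁺-vertex: it has an out-neighbor of every other color. -/
def IsBPlus {V : Type*} (E : V → V → Prop) {k : ℕ} (Γ : V → Fin k) (u : V) : Prop :=
  ∀ j : Fin k, j ≠ Γ u → ∃ w, E u w ∧ Γ w = j

/-- `u` is a b⁻-vertex: it has an in-neighbor of every other color. -/
def IsBMinus {V : Type*} (E : V → V → Prop) {k : ℕ} (Γ : V → Fin k) (u : V) : Prop :=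
  ∀ j : Fin k, j ≠ Γ u → ∃ w, E w u ∧ Γ w = j

/-- A b-coloring: an acyclic coloring in which every color class contains a
b⁺-vertex and a b⁻-vertex. -/
def IsBColoring {V : Type*} (E : V → V → Prop) {k : ℕ} (Γ : V → Fin k) : Prop :=
  AcyclicColoring E Γ ∧
    ∀ i : Fin k, (∃ u, Γ u = i ∧ IsBPlus E Γ u) ∧ (∃ u, Γ u = i ∧ IsBMinus E Γ u)

/-- The dib-chromatic number: the maximum number of colors of a b-coloring. -/
noncomputable def dib {V : Type*} (E : V → V → Prop) : ℕ :=
  sSup {k | ∃ Γ : V → Fin k, IsBColoring E Γ}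

/-- The dichromatic number: the minimum number of colors of an acyclic coloring. -/
noncomputable def dc {V : Type*} (E : V → V → Prop) : ℕ :=
  sInf {k | ∃ Γ : V → Fin k, AcyclicColoring E Γ}

/-- Out-degree. -/
noncomputable def outDeg {V : Type*} (E : V → V → Prop) (v : V) : ℕ := {w | E v w}.ncard

/-- In-degree. -/
noncomputable def inDeg {V : Type*} (E : V → V → Prop) (v : V) : ℕ := {w | E w v}.ncard

/-- `(A, B)` is a bipartition of the digraph: the parts are disjoint independent sets
covering all vertices, and every arc goes between the parts. -/
def IsBipartition {V : Type*} (E : V → V → Prop) (A B : Set V) : Prop :=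
  Disjoint A B ∧ A ∪ B = Set.univ ∧
    ∀ u v, E u v → (u ∈ A ∧ v ∈ B) ∨ (u ∈ B ∧ v ∈ A)

/-- The digraph is weakly connected. -/
def WeaklyConnected {V : Type*} (E : V → V → Prop) : Prop :=
  ∀ u v : V, Relation.ReflTransGen (fun a b => E a b ∨ E b a) u v

/-- The set `S` is weakly connected in the induced subdigraph. -/
def WeaklyConnectedOn {V : Type*} (E : V → V → Prop) (S : Set V) : Prop :=
  ∀ ⦃u⦄, u ∈ S → ∀ ⦃v⦄, v ∈ S →
    Relation.ReflTransGen (fun a b => (E a b ∨ E b a) ∧ a ∈ S ∧ b ∈ S) u v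

/-- A simple digraph (oriented graph): no digons. -/
def SimpleDigraph' {V : Type*} (E : V → V → Prop) : Prop :=
  ∀ u v, E u v → ¬ E v u
section AuxProofs

variable {V : Type*} [Fintype V]

lemma two_mem {S : Set V} (h : 2 ≤ S.ncard) : ∃ a b, a ∈ S ∧ b ∈ S ∧ a ≠ b :=
  (Set.one_lt_ncard_iff (Set.toFinite S)).1 h

lemma other_mem {S : Set V} (h : 2 ≤ S.ncard) (x : V) : ∃ a, a ∈ S ∧ a ≠ x := by
  obtain ⟨a, b, ha, hb, hab⟩ := two_mem h
  by_cases hax : a = x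
  · exact ⟨b, hb, fun hbx => hab (by rw [hax, hbx])⟩
  · exact ⟨a, ha, hax⟩

lemma pair_mem {S : Set V} (h : 2 ≤ S.ncard) {u w : V} (hsub : S ⊆ {u, w}) :
    u ∈ S ∧ w ∈ S := by
  constructor
  · by_contra hu
    have hsub' : S ⊆ {w} := by
      intro s hs
      rcases hsub hs with h1 | h1
      · exact absurd (h1 ▸ hs) hu
      · exact h1
    have := Set.ncard_le_ncard hsub' (Set.toFinite _)
    rw [Set.ncard_singleton] at this
    omega
  · by_contra hw
    have hsub' : S ⊆ {u} := by
      intro s hs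
      rcases hsub hs with h1 | h1
      · exact h1
      · exact absurd (h1 ▸ hs) hw
    have := Set.ncard_le_ncard hsub' (Set.toFinite _)
    rw [Set.ncard_singleton] at this
    omega

variable {E : V → V → Prop} {A B : Set V}

/-- target is in the opposite part -/
lemma tgtB (hd : Disjoint A B)
    (harcs : ∀ u v, E u v → u ∈ A ∧ v ∈ B ∨ u ∈ B ∧ v ∈ A)
    {u v : V} (h : E u v) (hu : u ∈ A) : v ∈ B := by
  rcases harcs u v h with ⟨_, hv⟩ | ⟨hu', _⟩
  · exact hv
  · exact absurd hu' (Set.disjoint_left.mp hd hu)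

lemma srcA (hd : Disjoint A B)
    (harcs : ∀ u v, E u v → u ∈ A ∧ v ∈ B ∨ u ∈ B ∧ v ∈ A)
    {u v : V} (h : E u v) (hv : v ∈ B) : u ∈ A := by
  rcases harcs u v h with ⟨hu, _⟩ | ⟨_, hv'⟩
  · exact hu
  · exact absurd hv (Set.disjoint_left.mp hd hv')

lemma tgtA (hd : Disjoint A B)
    (harcs : ∀ u v, E u v → u ∈ A ∧ v ∈ B ∨ u ∈ B ∧ v ∈ A)
    {u v : V} (h : E u v) (hu : u ∈ B) : v ∈ A := by
  rcases harcs u v h with ⟨hu', _⟩ | ⟨_, hv⟩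
  · exact absurd hu (Set.disjoint_left.mp hd hu')
  · exact hv

lemma srcB (hd : Disjoint A B)
    (harcs : ∀ u v, E u v → u ∈ A ∧ v ∈ B ∨ u ∈ B ∧ v ∈ A)
    {u v : V} (h : E u v) (hv : v ∈ A) : u ∈ B := by
  rcases harcs u v h with ⟨_, hv'⟩ | ⟨hu, _⟩
  · exact absurd hv' (Set.disjoint_left.mp hd hv)
  · exact hu

/-- no arcs within part A -/
lemma noAA (hd : Disjoint A B)
    (harcs : ∀ u v, E u v → u ∈ A ∧ v ∈ B ∨ u ∈ B ∧ v ∈ A)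
    {u v : V} (hu : u ∈ A) (hv : v ∈ A) : ¬ E u v := fun h =>
  Set.disjoint_left.mp hd hv (tgtB hd harcs h hu)

/-- A set contained in one part plus one exceptional vertex of the other part is acyclic. -/
lemma acyclic_insert (hd : Disjoint A B)
    (harcs : ∀ u v, E u v → u ∈ A ∧ v ∈ B ∨ u ∈ B ∧ v ∈ A)
    (hs : SimpleDigraph' E) {x : V} (hx : x ∈ B) {S : Set V}
    (hS : S ⊆ insert x A) : AcyclicSet E S := by
  rintro ⟨n, c, hmem, harc⟩
  by_cases hall : ∀ i, c i ∈ A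
  · exact noAA hd harcs (hall 0) (hall (0+1)) (harc 0)
  · push_neg at hall
    obtain ⟨i, hi⟩ := hall
    have hix : c i = x := by
      rcases hS (hmem i) with h | h
      · exact h
      · exact absurd h hi
    have h1 : c (i + 1) ∈ A := by
      have := harc i
      rw [hix] at this
      exact tgtA hd harcs this hx
    have h2 : c (i + 1 + 1) = x := by
      rcases hS (hmem (i + 1 + 1)) with h | h
      · exact h
      · exact absurd h (fun hA => Set.disjoint_left.mp hd hA (tgtB hd harcs (harc (i+1)) h1))
    have harc1 : E (c (i+1)) x := h2 ▸ harc (i+1)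
    have harc0 : E x (c (i+1)) := hix ▸ harc i
    exact hs _ _ harc0 harc1

/-- transfer of b-colorings along arc reversal -/
lemma isBColoring_of_rev {k : ℕ} (E : V → V → Prop) (Γ : V → Fin k)
    (h : IsBColoring (fun u v => E v u) Γ) : IsBColoring E Γ := by
  obtain ⟨hac, hb⟩ := h
  constructor
  · intro i
    rintro ⟨n, c, hmem, harc⟩
    refine hac i ⟨n, fun j => c (-j), fun j => hmem _, fun j => ?_⟩
    show E (c (-(j+1))) (c (-j))
    have hj : -(j + 1) + 1 = -j := by rw [neg_add, neg_add_cancel_right]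
    have := harc (-(j+1))
    rwa [hj] at this
  · intro i
    obtain ⟨⟨u, hu, hplus⟩, ⟨u', hu', hminus⟩⟩ := hb i
    exact ⟨⟨u', hu', fun j hj => hminus j hj⟩, ⟨u, hu, fun j hj => hplus j hj⟩⟩

lemma dib_ge_three (E : V → V → Prop) (h : ∃ Γ : V → Fin 3, IsBColoring E Γ) :
    3 ≤ dib E := by
  have hbdd : BddAbove {k | ∃ Γ : V → Fin k, IsBColoring E Γ} := by
    refine ⟨Fintype.card V, fun k hk => ?_⟩
    obtain ⟨Γ, hΓ⟩ := hk
    choose f hf _ using fun i => (hΓ.2 i).1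
    have hinj : Function.Injective f := fun i j hij => by rw [← hf i, ← hf j, hij]
    calc k = Fintype.card (Fin k) := (Fintype.card_fin k).symm
      _ ≤ Fintype.card V := Fintype.card_le_of_injective f hinj
  exact le_csSup hbdd h

end AuxProofs

section SchemeS

variable {V : Type*} [Fintype V]

/-- The configuration that makes scheme S work. -/
def HSconf (E : V → V → Prop) (A : Set V) : Prop :=
  ∃ a1 a2 b0 t t' y y' : V, a1 ∈ A ∧ a2 ∈ A ∧ a1 ≠ a2 ∧ E a1 b0 ∧ E a2 b0 ∧
    E a1 t ∧ E a2 t' ∧ t ≠ t' ∧ t ≠ b0 ∧ t' ≠ b0 ∧ E y t ∧ E y' t' ∧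
    y ≠ a1 ∧ y ≠ a2 ∧ y' ≠ a1 ∧ y' ≠ a2

lemma schemeS (E : V → V → Prop) (A B : Set V)
    (hd : Disjoint A B) (hcov : A ∪ B = Set.univ)
    (harcs : ∀ u v, E u v → u ∈ A ∧ v ∈ B ∨ u ∈ B ∧ v ∈ A)
    (hs : SimpleDigraph' E) (hdeg : ∀ v, 2 ≤ outDeg E v ∧ 2 ≤ inDeg E v)
    (hconf : HSconf E A) : ∃ Γ : V → Fin 3, IsBColoring E Γ := by
  classical
  obtain ⟨a1, a2, b0, t, t', y, y', ha1, ha2, hne, hab0, hab0', hat, hat', htt', htb0, ht'b0,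
    hyt, hyt', hya1, hya2, hy'a1, hy'a2⟩ := hconf
  have hb0B : b0 ∈ B := tgtB hd harcs hab0 ha1
  have htB : t ∈ B := tgtB hd harcs hat ha1
  have ht'B : t' ∈ B := tgtB hd harcs hat' ha2
  have hyA : y ∈ A := srcA hd harcs hyt htB
  have hy'A : y' ∈ A := srcA hd harcs hyt' ht'B
  have hAB : ∀ {a b : V}, a ∈ A → b ∈ B → a ≠ b := fun ha hb h =>
    Set.disjoint_left.mp hd (h ▸ ha) hb
  have hnB : ∀ {a : V}, a ∈ A → a ∉ B := fun ha => Set.disjoint_left.mp hd ha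
  -- splitter for b⁺ of class 0
  have hsplit : ∃ a0 p q, a0 ∈ A ∧ a0 ≠ a1 ∧ a0 ≠ a2 ∧ E a0 p ∧ E a0 q ∧ p ≠ q ∧
      p ≠ b0 ∧ q ≠ b0 := by
    by_contra hcon
    push_neg at hcon
    have hall : ∀ a ∈ A, E a b0 := by
      intro a ha
      by_cases h1 : a = a1
      · exact h1 ▸ hab0
      by_cases h2 : a = a2
      · exact h2 ▸ hab0'
      by_contra hnb
      obtain ⟨p, q, hp, hq, hpq⟩ := two_mem ((hdeg a).1)
      exact hnb ((hcon a p q ha h1 h2 hp hq hpq (fun h => hnb (h ▸ hp))) ▸ hq)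
    obtain ⟨z, z', hz, _, _⟩ := two_mem ((hdeg b0).1)
    have hzA : z ∈ A := tgtA hd harcs hz hb0B
    exact hs z b0 (hall z hzA) hz
  obtain ⟨a0, p, q, ha0A, ha01, ha02, hp, hq, hpq, hpb0, hqb0⟩ := hsplit
  have hpB : p ∈ B := tgtB hd harcs hp ha0A
  have hqB : q ∈ B := tgtB hd harcs hq ha0A
  set w1 := if p = t ∨ q = t' then q else p with hw1def
  set w2 := if p = t ∨ q = t' then p else q with hw2def
  have hw1arc : E a0 w1 := by rw [hw1def]; split_ifs <;> assumption
  have hw2arc : E a0 w2 := by rw [hw2def]; split_ifs <;> assumption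
  have hw1B : w1 ∈ B := by rw [hw1def]; split_ifs <;> assumption
  have hw2B : w2 ∈ B := by rw [hw2def]; split_ifs <;> assumption
  have hw1b0 : w1 ≠ b0 := by rw [hw1def]; split_ifs <;> assumption
  have hw2b0 : w2 ≠ b0 := by rw [hw2def]; split_ifs <;> assumption
  have hw12 : w1 ≠ w2 := by
    rw [hw1def, hw2def]; split_ifs
    · exact hpq.symm
    · exact hpq
  have hw1t : w1 ≠ t := by
    rw [hw1def]; split_ifs with hc
    · rcases hc with hc | hc
      · exact fun h => hpq (hc.trans h.symm)
      · exact fun h => htt' (h.symm.trans hc)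
    · push_neg at hc
      exact hc.1
  have hw2t' : w2 ≠ t' := by
    rw [hw2def]; split_ifs with hc
    · rcases hc with hc | hc
      · exact fun h => htt' (hc.symm.trans h)
      · exact fun h => hpq (h.trans hc.symm)
    · push_neg at hc
      exact hc.2
  -- the coloring
  set Γ : V → Fin 3 := fun v =>
    if v = b0 then 0 else if v = a1 then 1 else if v = a2 then 2
    else if v ∈ B then (if v = t' ∨ v = w1 then 1 else 2) else 0 with hΓdef
  have hvalB1 : ∀ v, v ∈ B → v ≠ b0 → (v = t' ∨ v = w1) → Γ v = 1 := by
    intro v hvB hvb0 hor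
    have h1 : v ≠ a1 := fun h => hAB ha1 hvB h.symm
    have h2 : v ≠ a2 := fun h => hAB ha2 hvB h.symm
    simp only [hΓdef]
    rw [if_neg hvb0, if_neg h1, if_neg h2, if_pos hvB, if_pos hor]
  have hvalB2 : ∀ v, v ∈ B → v ≠ b0 → v ≠ t' → v ≠ w1 → Γ v = 2 := by
    intro v hvB hvb0 h3 h4
    have h1 : v ≠ a1 := fun h => hAB ha1 hvB h.symm
    have h2 : v ≠ a2 := fun h => hAB ha2 hvB h.symm
    simp only [hΓdef]
    rw [if_neg hvb0, if_neg h1, if_neg h2, if_pos hvB, if_neg (not_or.mpr ⟨h3, h4⟩)]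
  have hvalA0 : ∀ v, v ∈ A → v ≠ a1 → v ≠ a2 → Γ v = 0 := by
    intro v hvA h1 h2
    simp only [hΓdef]
    rw [if_neg (hAB hvA hb0B), if_neg h1, if_neg h2, if_neg (hnB hvA)]
  have hΓb0 : Γ b0 = 0 := by simp [hΓdef]
  have hΓa1 : Γ a1 = 1 := by simp [hΓdef, hAB ha1 hb0B]
  have hΓa2 : Γ a2 = 2 := by simp [hΓdef, hAB ha2 hb0B, hne.symm]
  have hΓt : Γ t = 2 := hvalB2 t htB htb0 htt' (fun h => hw1t h.symm)
  have hΓt' : Γ t' = 1 := hvalB1 t' ht'B ht'b0 (Or.inl rfl)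
  have hΓw1 : Γ w1 = 1 := hvalB1 w1 hw1B hw1b0 (Or.inr rfl)
  have hΓw2 : Γ w2 = 2 := hvalB2 w2 hw2B hw2b0 hw2t' (fun h => hw12 h.symm)
  have hΓy : Γ y = 0 := hvalA0 y hyA hya1 hya2
  have hΓy' : Γ y' = 0 := hvalA0 y' hy'A hy'a1 hy'a2
  have hΓa0 : Γ a0 = 0 := hvalA0 a0 ha0A ha01 ha02
  refine ⟨Γ, ?_, ?_⟩
  · -- acyclicity
    intro i
    fin_cases i
    · -- class 0 ⊆ insert b0 A
      refine acyclic_insert hd harcs hs hb0B (fun v hv => ?_)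
      simp only [Set.mem_setOf_eq, hΓdef] at hv
      split_ifs at hv with h1 h2 h3 h4 h5
      · exact h1 ▸ Set.mem_insert _ _
      · exact absurd hv (by decide)
      · exact absurd hv (by decide)
      · exact absurd hv (by decide)
      · exact absurd hv (by decide)
      · have : v ∈ A ∪ B := hcov ▸ Set.mem_univ v
        rcases this with h | h
        · exact Set.mem_insert_of_mem _ h
        · exact absurd h h4
    · -- class 1 ⊆ insert a1 B
      have hd' : Disjoint B A := hd.symm
      have harcs' : ∀ u v, E u v → u ∈ B ∧ v ∈ A ∨ u ∈ A ∧ v ∈ B :=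
        fun u v h => (harcs u v h).symm
      refine acyclic_insert hd' harcs' hs ha1 (fun v hv => ?_)
      simp only [Set.mem_setOf_eq, hΓdef] at hv
      split_ifs at hv with h1 h2 h3 h4 h5
      · exact absurd hv (by decide)
      · exact h2 ▸ Set.mem_insert _ _
      · exact absurd hv (by decide)
      · exact Set.mem_insert_of_mem _ h4
      · exact Set.mem_insert_of_mem _ h4
      · exact absurd hv (by decide)
    · -- class 2 ⊆ insert a2 B
      have hd' : Disjoint B A := hd.symm
      have harcs' : ∀ u v, E u v → u ∈ B ∧ v ∈ A ∨ u ∈ A ∧ v ∈ B :=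
        fun u v h => (harcs u v h).symm
      refine acyclic_insert hd' harcs' hs ha2 (fun v hv => ?_)
      simp only [Set.mem_setOf_eq, hΓdef] at hv
      split_ifs at hv with h1 h2 h3 h4 h5
      · exact absurd hv (by decide)
      · exact absurd hv (by decide)
      · exact h3 ▸ Set.mem_insert _ _
      · exact Set.mem_insert_of_mem _ h4
      · exact Set.mem_insert_of_mem _ h4
      · exact absurd hv (by decide)
  · -- b-vertices
    intro i
    fin_cases i
    · refine ⟨⟨a0, hΓa0, ?_⟩, ⟨b0, hΓb0, ?_⟩⟩
      · intro j hj
        fin_cases j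
        · exact absurd hΓa0.symm hj
        · exact ⟨w1, hw1arc, hΓw1⟩
        · exact ⟨w2, hw2arc, hΓw2⟩
      · intro j hj
        fin_cases j
        · exact absurd hΓb0.symm hj
        · exact ⟨a1, hab0, hΓa1⟩
        · exact ⟨a2, hab0', hΓa2⟩
    · refine ⟨⟨a1, hΓa1, ?_⟩, ⟨t', hΓt', ?_⟩⟩
      · intro j hj
        fin_cases j
        · exact ⟨b0, hab0, hΓb0⟩
        · exact absurd hΓa1.symm hj
        · exact ⟨t, hat, hΓt⟩
      · intro j hj
        fin_cases j
        · exact ⟨y', hyt', hΓy'⟩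
        · exact absurd hΓt'.symm hj
        · exact ⟨a2, hat', hΓa2⟩
    · refine ⟨⟨a2, hΓa2, ?_⟩, ⟨t, hΓt, ?_⟩⟩
      · intro j hj
        fin_cases j
        · exact ⟨b0, hab0', hΓb0⟩
        · exact ⟨t', hat', hΓt'⟩
        · exact absurd hΓa2.symm hj
      · intro j hj
        fin_cases j
        · exact ⟨y, hyt, hΓy⟩
        · exact ⟨a1, hat, hΓa1⟩
        · exact absurd hΓt.symm hj

end SchemeS

section Closure

variable {V : Type*} [Fintype V]

/-- If scheme S fails in the two relevant orientations, vertices of `A` with a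
common out-neighbor have identical out-neighborhoods. -/
lemma closureB1 (E : V → V → Prop) (A B : Set V)
    (hd : Disjoint A B) (hcov : A ∪ B = Set.univ)
    (harcs : ∀ u v, E u v → u ∈ A ∧ v ∈ B ∨ u ∈ B ∧ v ∈ A)
    (hs : SimpleDigraph' E) (hdeg : ∀ v, 2 ≤ outDeg E v ∧ 2 ≤ inDeg E v)
    (h1 : ¬ HSconf E A) (h2 : ¬ HSconf (fun u v => E v u) B) :
    ∀ u w v, u ∈ A → w ∈ A → E u v → E w v → ∀ z, E u z → E w z := by
  intro u w v huA hwA huv hwv t hut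
  by_cases huw : u = w
  · exact huw ▸ hut
  by_contra hwt
  -- step 1
  have step1 : ∀ b, E u b → E w b → ∀ s, E w s → s ≠ b →
      (∀ r, E r s → r = u ∨ r = w) := by
    intro b hub hwb s hws hsb
    by_contra hcon
    push_neg at hcon
    obtain ⟨r, hrs, hru, hrw⟩ := hcon
    obtain ⟨e, he, heu⟩ := other_mem ((hdeg t).2) u
    have hew : e ≠ w := fun h => hwt (h ▸ he)
    exact h1 ⟨u, w, b, t, s, e, r, huA, hwA, huw, hub, hwb, hut, hws,
      (fun h => hwt (h ▸ hws)), (fun h => hwt (h ▸ hwb)), hsb, he, hrs, heu, hew, hru, hrw⟩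
  have step1' : ∀ b, E u b → E w b → ∀ s, E w s → s ≠ b → E u s := by
    intro b hub hwb s hws hsb
    have hsub : {r | E r s} ⊆ {u, w} := fun r hr => step1 b hub hwb s hws hsb r hr
    exact (pair_mem ((hdeg s).2) hsub).1
  obtain ⟨s2, hws2, hs2v⟩ := other_mem ((hdeg w).1) v
  have hus2 : E u s2 := step1' v huv hwv s2 hws2 hs2v
  have hins : ∀ s, E w s → ∀ r, E r s → r = u ∨ r = w := by
    intro s hws r hrs
    by_cases hsv : s = v
    · exact step1 s2 hus2 hws2 s hws (hsv.trans_ne (Ne.symm hs2v)) r hrs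
    · exact step1 v huv hwv s hws hsv r hrs
  -- step 3
  have step3 : ∀ e, E e t → e ≠ u → ∀ z', E e z' → z' = t ∨ z' = v := by
    intro e het heu z' hez'
    by_contra hcon
    push_neg at hcon
    obtain ⟨hz't, hz'v⟩ := hcon
    obtain ⟨g, hwg, hgv⟩ := other_mem ((hdeg w).1) v
    have hgt : g ≠ t := fun h => hwt (h ▸ hwg)
    have htB : t ∈ B := tgtB hd harcs hut huA
    have hvB : v ∈ B := tgtB hd harcs huv huA
    exact h2 ⟨t, v, u, e, w, z', g, htB, hvB, (fun h => hwt (h ▸ hwv)), hut, huv, het, hwv,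
      (fun h => hwt (h ▸ het)), heu, (fun h => huw h.symm), hez', hwg, hz't, hz'v, hgt, hgv⟩
  have hmain : ∀ e, E e t → e = u := by
    intro e het
    by_contra heu
    have hsub : {z' | E e z'} ⊆ {t, v} := fun z' hz' => step3 e het heu z' hz'
    have hev : E e v := (pair_mem ((hdeg e).1) hsub).2
    rcases hins v hwv e hev with h | h
    · exact heu h
    · exact hwt (h ▸ het)
  obtain ⟨e, het, heu⟩ := other_mem ((hdeg t).2) u
  exact heu (hmain e het)

end Closure

section SchemeG

variable {V : Type*} [Fintype V]

lemma schemeG (E : V → V → Prop) (A B : Set V) [Nonempty V]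
    (hd : Disjoint A B) (hcov : A ∪ B = Set.univ)
    (harcs : ∀ u v, E u v → u ∈ A ∧ v ∈ B ∨ u ∈ B ∧ v ∈ A)
    (hs : SimpleDigraph' E) (hdeg : ∀ v, 2 ≤ outDeg E v ∧ 2 ≤ inDeg E v)
    (hB1 : ∀ u w v, E u v → E w v → ∀ z, E u z → E w z)
    (hB2 : ∀ v x x', E v x → E v x' → ∀ z, E z x → E z x') :
    ∃ Γ : V → Fin 3, IsBColoring E Γ := by
  classical
  -- a vertex in A
  obtain ⟨a0, ha0⟩ : ∃ a, a ∈ A := by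
    obtain ⟨v0⟩ := ‹Nonempty V›
    have : v0 ∈ A ∪ B := hcov ▸ Set.mem_univ v0
    rcases this with h | h
    · exact ⟨v0, h⟩
    · obtain ⟨z, _, hz, _, _⟩ := two_mem ((hdeg v0).1)
      exact ⟨z, tgtA hd harcs hz h⟩
  obtain ⟨x1, hx1, _⟩ := other_mem ((hdeg a0).1) a0
  obtain ⟨y1, hy1, _⟩ := other_mem ((hdeg x1).1) x1
  obtain ⟨x2, hx2, _⟩ := other_mem ((hdeg y1).1) y1
  have hx1B : x1 ∈ B := tgtB hd harcs hx1 ha0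
  have hy1A : y1 ∈ A := tgtA hd harcs hy1 hx1B
  have hx2B : x2 ∈ B := tgtB hd harcs hx2 hy1A
  have hAB : ∀ {a b : V}, a ∈ A → b ∈ B → a ≠ b := fun ha hb h =>
    Set.disjoint_left.mp hd (h ▸ ha) hb
  have hnB : ∀ {a : V}, a ∈ A → a ∉ B := fun ha => Set.disjoint_left.mp hd ha
  -- basic facts
  have f2 : y1 ≠ a0 := fun h => hs a0 x1 hx1 (h ▸ hy1)
  have f4 : ¬ E y1 x1 := hs x1 y1 hy1
  have f5 : ¬ E x2 y1 := hs y1 x2 hx2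
  have f3 : ¬ E a0 x2 := fun h => f4 (hB2 a0 x2 x1 h hx1 y1 hx2)
  have hx2x1 : x2 ≠ x1 := fun h => f4 (h ▸ hx2)
  -- coloring
  set Γ : V → Fin 3 := fun v =>
    if v = a0 ∨ v = y1 then 1 else if v = x1 then 0 else if v = x2 then 1
    else if v ∈ B then 2 else 0 with hΓdef
  have hvalB2 : ∀ v, v ∈ B → v ≠ x1 → v ≠ x2 → Γ v = 2 := by
    intro v hvB hv1 hv2
    have h1 : ¬(v = a0 ∨ v = y1) :=
      not_or.mpr ⟨fun h => hAB ha0 hvB h.symm, fun h => hAB hy1A hvB h.symm⟩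
    simp only [hΓdef]
    rw [if_neg h1, if_neg hv1, if_neg hv2, if_pos hvB]
  have hvalA0 : ∀ v, v ∈ A → v ≠ a0 → v ≠ y1 → Γ v = 0 := by
    intro v hvA h1 h2
    have h3 : v ≠ x1 := hAB hvA hx1B
    have h4 : v ≠ x2 := hAB hvA hx2B
    simp only [hΓdef]
    rw [if_neg (not_or.mpr ⟨h1, h2⟩), if_neg h3, if_neg h4, if_neg (hnB hvA)]
  have hΓa0 : Γ a0 = 1 := by simp [hΓdef]
  have hΓy1 : Γ y1 = 1 := by simp [hΓdef]
  have hΓx1 : Γ x1 = 0 := by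
    simp only [hΓdef]
    rw [if_neg (not_or.mpr ⟨fun h => hAB ha0 hx1B h.symm, fun h => hAB hy1A hx1B h.symm⟩)]
    simp
  have hΓx2 : Γ x2 = 1 := by
    simp only [hΓdef]
    rw [if_neg (not_or.mpr ⟨fun h => hAB ha0 hx2B h.symm, fun h => hAB hy1A hx2B h.symm⟩),
      if_neg hx2x1]
    simp
  -- class 1 is exactly the triple
  have hclass1 : ∀ v, Γ v = 1 → v = a0 ∨ v = y1 ∨ v = x2 := by
    intro v hv
    simp only [hΓdef] at hv
    split_ifs at hv with h1 h2 h3 h4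
    · rcases h1 with h | h
      · exact Or.inl h
      · exact Or.inr (Or.inl h)
    · exact absurd hv (by decide)
    · exact Or.inr (Or.inr h3)
    · exact absurd hv (by decide)
    · exact absurd hv (by decide)
  -- witnesses
  obtain ⟨z, hz, hzx1⟩ := other_mem ((hdeg a0).1) x1
  have hzB : z ∈ B := tgtB hd harcs hz ha0
  have hzx2 : z ≠ x2 := fun h => f3 (h ▸ hz)
  have hΓz : Γ z = 2 := hvalB2 z hzB hzx1 hzx2
  obtain ⟨w, hw, hwx1⟩ := other_mem ((hdeg y1).2) x1
  have hwB : w ∈ B := srcB hd harcs hw hy1A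
  have hwx2 : w ≠ x2 := fun h => f5 (h ▸ hw)
  have hΓw : Γ w = 2 := hvalB2 w hwB hwx1 hwx2
  obtain ⟨y', hy', hy'y1⟩ := other_mem ((hdeg x1).1) y1
  have hy'A : y' ∈ A := tgtA hd harcs hy' hx1B
  have hy'a0 : y' ≠ a0 := fun h => (hs a0 x1 hx1) (h ▸ hy')
  have hΓy' : Γ y' = 0 := hvalA0 y' hy'A hy'a0 hy'y1
  have hwy' : E w y' := hB1 x1 w y1 hy1 hw y' hy'
  obtain ⟨x2', hx2', hx2'x2⟩ := other_mem ((hdeg y1).1) x2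
  have hx2'B : x2' ∈ B := tgtB hd harcs hx2' hy1A
  have hx2'x1 : x2' ≠ x1 := fun h => f4 (h ▸ hx2')
  have hΓx2' : Γ x2' = 2 := hvalB2 x2' hx2'B hx2'x1 hx2'x2
  obtain ⟨u', hu', hu'y1⟩ := other_mem ((hdeg x2).2) y1
  have hu'A : u' ∈ A := srcA hd harcs hu' hx2B
  have hu'a0 : u' ≠ a0 := fun h => f3 (h ▸ hu')
  have hΓu' : Γ u' = 0 := hvalA0 u' hu'A hu'a0 hu'y1
  have hu'x2' : E u' x2' := hB2 y1 x2 x2' hx2 hx2' u' hu'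
  obtain ⟨y'', hy'', hy''a0⟩ := other_mem ((hdeg x2).1) a0
  have hy''A : y'' ∈ A := tgtA hd harcs hy'' hx2B
  have hy''y1 : y'' ≠ y1 := fun h => f5 (h ▸ hy'')
  have hΓy'' : Γ y'' = 0 := hvalA0 y'' hy''A hy''a0 hy''y1
  obtain ⟨w2, hw2, hw2x2⟩ := other_mem ((hdeg y'').2) x2
  have hw2B : w2 ∈ B := srcB hd harcs hw2 hy''A
  have hw2x1 : w2 ≠ x1 := by
    intro h
    have hx1y'' : E x1 y'' := h ▸ hw2
    exact f5 (hB2 x1 y'' y1 hx1y'' hy1 x2 hy'')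
  have hΓw2 : Γ w2 = 2 := hvalB2 w2 hw2B hw2x1 hw2x2
  refine ⟨Γ, ?_, ?_⟩
  · -- acyclicity
    intro i
    fin_cases i
    · -- class 0 ⊆ insert x1 A
      refine acyclic_insert hd harcs hs hx1B (fun v hv => ?_)
      simp only [Set.mem_setOf_eq, hΓdef] at hv
      split_ifs at hv with h1 h2 h3 h4
      · exact absurd hv (by decide)
      · exact h2 ▸ Set.mem_insert _ _
      · exact absurd hv (by decide)
      · exact absurd hv (by decide)
      · have : v ∈ A ∪ B := hcov ▸ Set.mem_univ v
        rcases this with h | h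
        · exact Set.mem_insert_of_mem _ h
        · exact absurd h h4
    · -- class 1 = triple: direct argument
      rintro ⟨n, c, hmem, harc⟩
      have htri : ∀ i, c i = a0 ∨ c i = y1 ∨ c i = x2 := fun i => hclass1 _ (hmem i)
      have noAAl : ∀ (i : Fin (n+1)) (s : V), s ∈ A → c i = s → c (i+1) ∈ A → False :=
        fun i s hsA hcs hA => noAA hd harcs (hcs ▸ hsA) hA (harc i)
      have h1 : ∀ i : Fin (n+1), c i = a0 → False := by
        intro i h
        rcases htri (i+1) with h' | h' | h'
        · exact noAAl i a0 ha0 h (h' ▸ ha0)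
        · exact noAAl i a0 ha0 h (h' ▸ hy1A)
        · have harc' := harc i
          rw [h, h'] at harc'
          exact f3 harc'
      have h2 : ∀ i : Fin (n+1), c i = x2 → False := by
        intro i h
        rcases htri (i+1) with h' | h' | h'
        · exact h1 (i+1) h'
        · have harc' := harc i
          rw [h, h'] at harc'
          exact f5 harc'
        · have harc' := harc i
          rw [h, h'] at harc'
          exact hs x2 x2 harc' harc'
      have h3 : ∀ i : Fin (n+1), c i = y1 → False := by
        intro i h
        rcases htri (i+1) with h' | h' | h'
        · exact noAAl i y1 hy1A h (h' ▸ ha0)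
        · exact noAAl i y1 hy1A h (h' ▸ hy1A)
        · exact h2 (i+1) h'
      rcases htri 0 with h | h | h
      exacts [h1 0 h, h3 0 h, h2 0 h]
    · -- class 2 ⊆ insert a0 B
      have hd' : Disjoint B A := hd.symm
      have harcs' : ∀ u v, E u v → u ∈ B ∧ v ∈ A ∨ u ∈ A ∧ v ∈ B :=
        fun u v h => (harcs u v h).symm
      refine acyclic_insert hd' harcs' hs ha0 (fun v hv => ?_)
      simp only [Set.mem_setOf_eq, hΓdef] at hv
      split_ifs at hv with h1 h2 h3 h4
      · exact absurd hv (by decide)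
      · exact absurd hv (by decide)
      · exact absurd hv (by decide)
      · exact Set.mem_insert_of_mem _ h4
      · exact absurd hv (by decide)
  · -- b-vertices
    intro i
    fin_cases i
    · refine ⟨⟨u', hΓu', ?_⟩, ⟨y'', hΓy'', ?_⟩⟩
      · intro j hj
        fin_cases j
        · exact absurd hΓu'.symm hj
        · exact ⟨x2, hu', hΓx2⟩
        · exact ⟨x2', hu'x2', hΓx2'⟩
      · intro j hj
        fin_cases j
        · exact absurd hΓy''.symm hj
        · exact ⟨x2, hy'', hΓx2⟩
        · exact ⟨w2, hw2, hΓw2⟩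
    · refine ⟨⟨a0, hΓa0, ?_⟩, ⟨y1, hΓy1, ?_⟩⟩
      · intro j hj
        fin_cases j
        · exact ⟨x1, hx1, hΓx1⟩
        · exact absurd hΓa0.symm hj
        · exact ⟨z, hz, hΓz⟩
      · intro j hj
        fin_cases j
        · exact ⟨x1, hy1, hΓx1⟩
        · exact absurd hΓy1.symm hj
        · exact ⟨w, hw, hΓw⟩
    · refine ⟨⟨w, hΓw, ?_⟩, ⟨x2', hΓx2', ?_⟩⟩
      · intro j hj
        fin_cases j
        · exact ⟨y', hwy', hΓy'⟩
        · exact ⟨y1, hw, hΓy1⟩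
        · exact absurd hΓw.symm hj
      · intro j hj
        fin_cases j
        · exact ⟨u', hu'x2', hΓu'⟩
        · exact ⟨y1, hx2', hΓy1⟩
        · exact absurd hΓx2'.symm hj

end SchemeG


/-- a simple (digon-free) bipartite digraph with δ ≥ 2 has dib ≥ 3. -/
theorem stmt9 {V : Type*} [Fintype V] [Nonempty V] (E : V → V → Prop) (A B : Set V)
    (hbip : IsBipartition E A B) (hsimple : SimpleDigraph' E)
    (hdeg : ∀ v, 2 ≤ outDeg E v ∧ 2 ≤ inDeg E v) :
    3 ≤ dib E := by
  obtain ⟨hd, hcov, harcs⟩ := hbip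
  have hd' : Disjoint B A := hd.symm
  have hcov' : B ∪ A = Set.univ := by rw [Set.union_comm]; exact hcov
  have harcs' : ∀ u v, E u v → u ∈ B ∧ v ∈ A ∨ u ∈ A ∧ v ∈ B :=
    fun u v h => (harcs u v h).symm
  set E' : V → V → Prop := fun u v => E v u with hE'
  have harcsR : ∀ u v, E' u v → u ∈ A ∧ v ∈ B ∨ u ∈ B ∧ v ∈ A := by
    intro u v h
    rcases harcs v u h with ⟨h1, h2⟩ | ⟨h1, h2⟩
    exacts [Or.inr ⟨h2, h1⟩, Or.inl ⟨h2, h1⟩]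
  have harcsR' : ∀ u v, E' u v → u ∈ B ∧ v ∈ A ∨ u ∈ A ∧ v ∈ B := by
    intro u v h
    rcases harcs v u h with ⟨h1, h2⟩ | ⟨h1, h2⟩
    exacts [Or.inl ⟨h2, h1⟩, Or.inr ⟨h2, h1⟩]
  have hsR : SimpleDigraph' E' := fun u v h h' => hsimple v u h h'
  have hdegR : ∀ v, 2 ≤ outDeg E' v ∧ 2 ≤ inDeg E' v := fun v => ⟨(hdeg v).2, (hdeg v).1⟩
  by_cases hc1 : HSconf E A
  · exact dib_ge_three E (schemeS E A B hd hcov harcs hsimple hdeg hc1)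
  by_cases hc2 : HSconf E B
  · exact dib_ge_three E (schemeS E B A hd' hcov' harcs' hsimple hdeg hc2)
  by_cases hc3 : HSconf E' A
  · obtain ⟨Γ, hΓ⟩ := schemeS E' A B hd hcov harcsR hsR hdegR hc3
    exact dib_ge_three E ⟨Γ, isBColoring_of_rev E Γ hΓ⟩
  by_cases hc4 : HSconf E' B
  · obtain ⟨Γ, hΓ⟩ := schemeS E' B A hd' hcov' harcsR' hsR hdegR hc4
    exact dib_ge_three E ⟨Γ, isBColoring_of_rev E Γ hΓ⟩
  have hB1 : ∀ u w v, E u v → E w v → ∀ z, E u z → E w z := by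
    intro u w v huv hwv
    have hv : v ∈ A ∪ B := hcov ▸ Set.mem_univ v
    rcases hv with hvA | hvB
    · exact closureB1 E B A hd' hcov' harcs' hsimple hdeg hc2 hc3
        u w v (srcB hd harcs huv hvA) (srcB hd harcs hwv hvA) huv hwv
    · exact closureB1 E A B hd hcov harcs hsimple hdeg hc1 hc4
        u w v (srcA hd harcs huv hvB) (srcA hd harcs hwv hvB) huv hwv
  have hB2 : ∀ v x x', E v x → E v x' → ∀ z, E z x → E z x' := by
    intro v x x' hvx hvx' z hzx
    have hv : v ∈ A ∪ B := hcov ▸ Set.mem_univ v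
    rcases hv with hvA | hvB
    · exact closureB1 E' B A hd' hcov' harcsR' hsR hdegR hc4 hc1
        x x' v (tgtB hd harcs hvx hvA) (tgtB hd harcs hvx' hvA) hvx hvx' z hzx
    · exact closureB1 E' A B hd hcov harcsR hsR hdegR hc3 hc2
        x x' v (tgtA hd harcs hvx hvB) (tgtA hd harcs hvx' hvB) hvx hvx' z hzx
  exact dib_ge_three E (schemeG E A B hd hcov harcs hsimple hdeg hB1 hB2)
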